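/- For a semigroup S with finitely many left ideals, the inclusion ideal graph In(S) contains no induced cycle of odd length at least 5 (no odd hole). -/

import Mathlib

open Set

variable {S : Type*}

/-- A left ideal of a semigroup: a nonempty subset `I` with `S * I ⊆ I`. -/
def IsLeftIdeal [Semigroup S] (I : Set S) : Prop :=
  I.Nonempty ∧ ∀ s : S, ∀ x ∈ I, s * x ∈ I

/-- A nontrivial left ideal is a left ideal different from `S`. -/
def IsNontrivialLeftIdeal [Semigroup S] (I : Set S) : Prop :=
  IsLeftIdeal I ∧ I ≠ Set.univ

/-- A minimal left ideal: a nontrivial left ideal properly containing no left ideal. -/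
def IsMinimalLeftIdeal [Semigroup S] (I : Set S) : Prop :=
  IsNontrivialLeftIdeal I ∧ ∀ J : Set S, IsLeftIdeal J → J ⊆ I → J = I

/-- A maximal left ideal: a nontrivial left ideal properly contained in no
nontrivial left ideal. -/
def IsMaximalLeftIdeal [Semigroup S] (I : Set S) : Prop :=
  IsNontrivialLeftIdeal I ∧ ∀ J : Set S, IsNontrivialLeftIdeal J → I ⊆ J → J = I

/-- Vertices of the inclusion ideal graph: the nontrivial left ideals of `S`. -/
def IdealVert (S : Type*) [Semigroup S] := {I : Set S // IsNontrivialLeftIdeal I}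

/-- The inclusion ideal graph of a semigroup: distinct nontrivial left ideals are
adjacent iff one properly contains the other. -/
def inclusionIdealGraph (S : Type*) [Semigroup S] : SimpleGraph (IdealVert S) :=
  SimpleGraph.fromRel (fun I J => I.1 ⊂ J.1)

open Fin.NatCast Fin.CommRing

/-- For a semigroup with finitely many left ideals, `In(S)` contains no induced odd
cycle of length at least `5`. -/
theorem stmt11 [Semigroup S] (hfin : {I : Set S | IsLeftIdeal I}.Finite)
    (n : ℕ) (hodd : Odd n) (hn : 5 ≤ n) :
    IsEmpty (SimpleGraph.cycleGraph n ↪g inclusionIdealGraph S) := by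
  constructor
  intro f
  obtain ⟨m, rfl⟩ : ∃ m, n = m + 2 := ⟨n - 2, by omega⟩
  -- consecutive vertices are adjacent in the cycle graph
  have hadj : ∀ i : Fin (m+2), (SimpleGraph.cycleGraph (m+2)).Adj i (i+1) := by
    intro i
    rw [SimpleGraph.cycleGraph_adj]
    right; exact add_sub_cancel_left i 1
  -- vertices at distance two are not adjacent (since n ≥ 5 > 4)
  have hnadj : ∀ i : Fin (m+2), ¬ (SimpleGraph.cycleGraph (m+2)).Adj i (i+2) := by
    intro i h
    rw [SimpleGraph.cycleGraph_adj] at h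
    rcases h with h | h
    · rw [sub_eq_iff_eq_add] at h
      have h0 := sub_eq_zero_of_eq h.symm
      have h3 : (3 : Fin (m+2)) = 0 := by rw [← h0]; ring
      have hv : (3 : Fin (m+2)).val = 0 := by rw [h3]; rfl
      have hv2 : 3 % (m+2) = 0 := hv
      rw [Nat.mod_eq_of_lt (by omega)] at hv2
      omega
    · have h2 : (2 : Fin (m+2)) = 1 := by rw [← h, add_comm i 2, add_sub_cancel_right]
      have h10 : (1 : Fin (m+2)) = 0 := by
        rw [show (1:Fin (m+2)) = 2 - 1 by ring, h2, sub_self]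
      have hv : (1 : Fin (m+2)).val = 0 := by rw [h10]; rfl
      rw [Fin.val_one] at hv
      exact one_ne_zero hv
  -- the orientation predicate along the cycle
  set p : Fin (m+2) → Prop := fun i => (f i).1 ⊂ (f (i+1)).1 with hp
  have hedge : ∀ i : Fin (m+2), p i ∨ (f (i+1)).1 ⊂ (f i).1 := by
    intro i
    have := f.map_rel_iff.mpr (hadj i)
    simp only [inclusionIdealGraph, SimpleGraph.fromRel_adj] at this
    exact this.2
  -- orientations must alternate, else transitivity yields a chord
  have halt : ∀ i : Fin (m+2), ¬ (p i ↔ p (i+1)) := by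
    intro i hiff
    apply hnadj i
    rw [← f.map_rel_iff]; simp only [inclusionIdealGraph, SimpleGraph.fromRel_adj]
    by_cases hpi : p i
    · have hpi1 : p (i+1) := hiff.mp hpi
      rw [hp] at hpi hpi1
      have hss : (f i).1 ⊂ (f (i+1+1)).1 := hpi.trans hpi1
      rw [show i + 1 + 1 = i + 2 by ring] at hss
      refine ⟨fun he => hss.ne ?_, Or.inl hss⟩
      exact congrArg Subtype.val he
    · have h1 : (f (i+1)).1 ⊂ (f i).1 := (hedge i).resolve_left hpi
      have h2 : (f (i+1+1)).1 ⊂ (f (i+1)).1 :=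
        (hedge (i+1)).resolve_left (fun h => hpi (hiff.mpr h))
      have hss : (f (i+1+1)).1 ⊂ (f i).1 := h2.trans h1
      rw [show i + 1 + 1 = i + 2 by ring] at hss
      refine ⟨fun he => hss.ne ?_, Or.inr hss⟩
      exact (congrArg Subtype.val he).symm
  -- parity argument: walk around the whole cycle
  have key : ∀ k : ℕ, (p (k : Fin (m+2)) ↔ (p 0 ↔ Even k)) := by
    intro k
    induction k with
    | zero => simp
    | succ k ih =>
      have hcast : ((k+1 : ℕ) : Fin (m+2)) = (k : Fin (m+2)) + 1 := by push_cast; ring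
      rw [hcast]
      have := halt (k : Fin (m+2))
      rw [Nat.even_add_one]
      tauto
  have hcastn : ((m + 2 : ℕ) : Fin (m+2)) = 0 := by
    rw [Fin.ext_iff]
    simp [Fin.val_natCast, Nat.mod_self]
  have hkey := key (m+2)
  rw [hcastn] at hkey
  have hne : ¬ Even (m+2) := by
    rw [Nat.even_iff]; rcases hodd with ⟨j, hj⟩; omega
  tauto
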